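/- Define the category Δ(θ,F): objects are elements of Π, and morphisms x → y of grade σ are pairs (u,σ) with u : F^σ(x) → y a morphism in the type-(Π,A) category (so F^σ(x) = y and u = (y,a) for some a ∈ A). With composition (u,σ)·(v,τ) = (u ∘ F^σ(v) ∘ (θ^{σ,τ}_x)⁻¹, στ), composition is associative and (id, 1) is a two-sided identity, provided (θ,F) satisfies the factor set axioms θ^{1,σ} = id = θ^{σ,1}, F¹ = id, and θ^{στ,γ}∘θ^{σ,τ}F^γ = θ^{σ,τγ}∘F^σθ^{τ,γ}. -/

import Mathlib

variable {G A Γ : Type*} [Group G] [Group Γ] [AddCommGroup A]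

/-- A morphism x → y of grade σ in the crossed product category Δ(θ,F): it exists iff
F^σ(x) = φ^σ(x) = y, and is then determined by an element a ∈ A. -/
structure DelHom (A : Type*) {G Γ : Type*} [Group G] [Group Γ]
    (φ : Γ →* MulAut G) (x y : G) where
  a : A
  g : Γ
  eq : φ g x = y

/-- The identity morphism (id, 1) : x → x (uses F¹ = id, i.e. φ¹ = id). -/
def idm (φ : Γ →* MulAut G) (x : G) : DelHom A φ x x :=
  ⟨0, 1, by simp⟩

/-- Composition in Δ(θ,F): the composite of (u,σ) : x → y and (v,τ) : y → z is the
morphism (v ∘ F^τ(u) ∘ (θ_x)⁻¹, τσ) : x → z, whose A-component is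
v.a + f^τ(u.a) − t(x,τ,σ). -/
def comp (φ : Γ →* MulAut G) (f : Γ →* Multiplicative (AddAut A)) (t : G → Γ → Γ → A) {x y z : G}
    (u : DelHom A φ x y) (v : DelHom A φ y z) : DelHom A φ x z :=
  ⟨v.a + Multiplicative.toAdd (f v.g) u.a - t x v.g u.g, v.g * u.g, by
    rw [map_mul, MulAut.mul_apply, u.eq, v.eq]⟩

/-- given a factor set (θ,F) on Γ with coefficients in the categorical group
of type (Π,A) — normalization θ^{1,σ} = id = θ^{σ,1}, F¹ = id, and the cocycle condition
for θ — composition in Δ(θ,F) is associative and (id,1) is a two-sided identity. -/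
theorem stmt19 (φ : Γ →* MulAut G) (f : Γ →* Multiplicative (AddAut A)) (t : G → Γ → Γ → A)
    -- θ^{1,σ} = id = θ^{σ,1}
    (ht1 : ∀ (x : G) (σ : Γ), t x 1 σ = 0)
    (ht2 : ∀ (x : G) (σ : Γ), t x σ 1 = 0)
    -- the cocycle condition (naturality of θ and condition iii) of a factor set)
    (hcoc : ∀ (x : G) (σ τ γ : Γ),
      Multiplicative.toAdd (f σ) (t x τ γ) + t x σ (τ * γ) = t x (σ * τ) γ + t ((φ γ) x) σ τ) :
    -- associativity
    (∀ (x y z w : G) (u : DelHom A φ x y) (v : DelHom A φ y z) (w' : DelHom A φ z w),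
      comp φ f t (comp φ f t u v) w' = comp φ f t u (comp φ f t v w')) ∧
    -- left and right identities
    (∀ (x y : G) (u : DelHom A φ x y), comp φ f t (idm φ x) u = u) ∧
    (∀ (x y : G) (u : DelHom A φ x y), comp φ f t u (idm φ y) = u) := by
  refine ⟨?_, ?_, ?_⟩
  · intro x y z w u v w'
    have hx : φ u.g x = y := u.eq
    have key := hcoc x w'.g v.g u.g
    rw [hx] at key
    simp only [comp]
    congr 1
    · have := congrArg (f w'.g) (rfl : v.a + f v.g u.a - t x v.g u.g = v.a + f v.g u.a - t x v.g u.g)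
      simp only [map_add, map_sub, AddAut.add_apply, map_mul, toAdd_mul] at *
      linear_combination (norm := abel) -key
    · exact (mul_assoc _ _ _).symm
  · intro x y u
    rcases u with ⟨a, g, eq⟩
    simp [comp, idm, ht2]
  · intro x y u
    rcases u with ⟨a, g, eq⟩
    simp [comp, idm, ht1]
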